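/- arXiv:2602.23107 — 6 statements merged into one kernel-verified Lean document; each statement's English description precedes it below -/
import Mathlib

section
/- Let G be an LCA group and let G₀ be the connected component of the identity in G. Then the annihilator of G₀ in the Pontryagin dual of G equals the set of compact elements of the Pontryagin dual; that is, a continuous character χ : G → 𝕊¹ vanishes on G₀ if and only if the closure in the dual group of the cyclic subgroup generated by χ is compact. -/
open Set Filter Complex


lemma circle_exp_pow (θ : ℝ) (n : ℕ) : Circle.exp θ ^ n = Circle.exp (n * θ) := by
  induction n with
  | zero => simp
  | succ k ih =>
    rw [pow_succ, ih, ← Circle.exp_add]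
    congr 1
    push_cast
    ring

/-- If every natural power of `z : Circle` has positive real part, then `z = 1`. -/
lemma circle_eq_one_of_pow_re_pos {z : Circle} (h : ∀ n : ℕ, 0 < ((z ^ n : Circle) : ℂ).re) :
    z = 1 := by
  set θ := Complex.arg (z : ℂ) with hθ
  have hre : 0 < (z : ℂ).re := by simpa using h 1
  have habs : |θ| < Real.pi / 2 := Complex.abs_arg_lt_pi_div_two_iff.2 (Or.inl hre)
  by_contra hz
  have hθne : θ ≠ 0 := by
    intro h0
    apply hz
    have := Circle.exp_arg z
    rw [← hθ] at this
    rw [h0, Circle.exp_zero] at this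
    exact this.symm
  have hθpos : 0 < |θ| := abs_pos.2 hθne
  set n : ℕ := ⌈(Real.pi / 2) / |θ|⌉₊ with hn
  have h1 : Real.pi / 2 ≤ n * |θ| := by
    rw [← div_le_iff₀ hθpos]
    exact Nat.le_ceil _
  have h2 : (n : ℝ) * |θ| < Real.pi := by
    have : (n : ℝ) < (Real.pi / 2) / |θ| + 1 := Nat.ceil_lt_add_one (by positivity)
    calc (n : ℝ) * |θ| < ((Real.pi / 2) / |θ| + 1) * |θ| := by
          exact mul_lt_mul_of_pos_right this hθpos
      _ = Real.pi / 2 + |θ| := by field_simp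
      _ < Real.pi / 2 + Real.pi / 2 := by linarith
      _ = Real.pi := by ring
  have hzexp : z = Circle.exp θ := (Circle.exp_arg z).symm
  have hpow : (z ^ n : Circle) = Circle.exp (n * θ) := by
    rw [hzexp]; exact circle_exp_pow θ n
  have hre2 : ((z ^ n : Circle) : ℂ).re = Real.cos (n * θ) := by
    rw [hpow, Circle.coe_exp]
    exact Complex.exp_ofReal_mul_I_re _
  have hcos : Real.cos ((n : ℝ) * θ) ≤ 0 := by
    have habs' : |(n : ℝ) * θ| = n * |θ| := by
      rw [abs_mul, Nat.abs_cast]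
    rw [← Real.cos_abs, habs']
    exact Real.cos_nonpos_of_pi_div_two_le_of_le h1 (by linarith [Real.pi_pos])
  have := h n
  rw [hre2] at this
  linarith


/-- In a totally disconnected locally compact Hausdorff group, every neighborhood of `1`
contains an open subgroup. -/
lemma exists_openSubgroup_subset {Q : Type*} [Group Q] [TopologicalSpace Q] [IsTopologicalGroup Q]
    [LocallyCompactSpace Q] [T2Space Q] [TotallyDisconnectedSpace Q]
    {U : Set Q} (hU : U ∈ nhds (1 : Q)) :
    ∃ H : Subgroup Q, IsOpen (H : Set Q) ∧ (H : Set Q) ⊆ U := by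
  obtain ⟨K₀, hK₀mem, hK₀U, hK₀c⟩ := local_compact_nhds hU
  obtain ⟨C, hC, h1C, hCK⟩ :=
    loc_compact_Haus_tot_disc_of_zero_dim.mem_nhds_iff.1
      (isOpen_interior.mem_nhds (mem_interior_iff_mem_nhds.2 hK₀mem))
  have hCcomp : IsCompact C := hK₀c.of_isClosed_subset hC.1 (hCK.trans interior_subset)
  have hCU : C ⊆ U := (hCK.trans interior_subset).trans hK₀U
  obtain ⟨V, hV, hCV⟩ := compact_open_separated_mul_right hCcomp hC.2 Subset.rfl
  set W : Set Q := (V ∩ V⁻¹) ∩ C with hWdef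
  have hWnhds : W ∈ nhds (1 : Q) := by
    refine Filter.inter_mem (Filter.inter_mem hV (inv_mem_nhds_one Q hV)) (hC.2.mem_nhds h1C)
  have hWV : W ⊆ V := fun x hx => hx.1.1
  have hWinvV : W⁻¹ ⊆ V := by
    intro x hx
    rw [Set.mem_inv] at hx
    have := hx.1.2
    rwa [Set.mem_inv, inv_inv] at this
  -- every element of the subgroup closure of W translates C into C
  have key : ∀ g ∈ Subgroup.closure W, ∀ c ∈ C, c * g ∈ C := by
    intro g hg
    have hg' : g ∈ Submonoid.closure (W ∪ W⁻¹) := by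
      have hg'' : g ∈ (Subgroup.closure W).toSubmonoid := hg
      rwa [Subgroup.closure_toSubmonoid] at hg''
    clear hg
    induction hg' using Submonoid.closure_induction with
    | one => intro c hc; simpa using hc
    | mul x y hx hy ihx ihy =>
      intro c hc
      rw [← mul_assoc]
      exact ihy _ (ihx c hc)
    | mem x hx =>
      intro c hc
      rcases hx with hx | hx
      · exact hCV (Set.mul_mem_mul hc (hWV hx))
      · exact hCV (Set.mul_mem_mul hc (hWinvV hx))
  refine ⟨Subgroup.closure W, ?_, ?_⟩
  · exact Subgroup.isOpen_of_mem_nhds _ (Filter.mem_of_superset hWnhds Subgroup.subset_closure)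
  · intro g hg
    have := key g hg 1 h1C
    simpa using hCU (by simpa using this)


lemma quotient_connectedComponentOfOne_totallyDisconnected
    (G : Type*) [Group G] [TopologicalSpace G] [IsTopologicalGroup G] :
    TotallyDisconnectedSpace (G ⧸ Subgroup.connectedComponentOfOne G) := by
  set N := Subgroup.connectedComponentOfOne G with hN
  -- the map to connected components, descended to the quotient
  have hsound : ∀ a b : G, @Setoid.r G (QuotientGroup.leftRel N) a b →
      (ConnectedComponents.mk a = ConnectedComponents.mk b) :=
    by
    intro a b hab
    rw [QuotientGroup.leftRel_apply] at hab
    -- a⁻¹ * b ∈ connectedComponent 1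
    have hb : b ∈ connectedComponent a := by
      have h1 : (fun x => a * x) '' connectedComponent (1 : G) ⊆ connectedComponent (a * 1) :=
        Continuous.image_connectedComponent_subset (continuous_mul_left a) 1
      have : b ∈ (fun x => a * x) '' connectedComponent (1 : G) :=
        ⟨a⁻¹ * b, hab, by group⟩
      simpa using h1 this
    exact ConnectedComponents.coe_eq_coe.2 (connectedComponent_eq hb)
  set ψ : G ⧸ N → ConnectedComponents G :=
    fun q => Quotient.liftOn' q ConnectedComponents.mk hsound with hψ
  have hψmk : ∀ g : G, ψ (QuotientGroup.mk g) = ConnectedComponents.mk g := fun g => rfl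
  have hψcont : Continuous ψ :=
    (QuotientGroup.isQuotientMap_mk N).continuous_iff.mpr ConnectedComponents.continuous_coe
  rw [totallyDisconnectedSpace_iff_connectedComponent_singleton]
  intro x
  obtain ⟨a, rfl⟩ := QuotientGroup.mk_surjective x
  apply Set.eq_singleton_iff_unique_mem.2 ⟨mem_connectedComponent, ?_⟩
  intro y hy
  obtain ⟨b, rfl⟩ := QuotientGroup.mk_surjective y
  -- ψ is constant on connected components
  have h1 : ψ '' connectedComponent (QuotientGroup.mk a) ⊆ connectedComponent (ψ (QuotientGroup.mk a)) :=
    hψcont.image_connectedComponent_subset _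
  have h2 : ψ (QuotientGroup.mk b) ∈ connectedComponent (ψ (QuotientGroup.mk a)) :=
    h1 ⟨_, hy, rfl⟩
  rw [connectedComponent_eq_singleton (x := ψ (QuotientGroup.mk a))] at h2
  rw [hψmk, hψmk] at h2
  rw [Set.mem_singleton_iff] at h2
  have hb : connectedComponent b = connectedComponent a := ConnectedComponents.coe_eq_coe.1 h2
  -- deduce a⁻¹ * b ∈ connectedComponent 1
  have hmem : a⁻¹ * b ∈ connectedComponent (1 : G) := by
    have h3 : (fun x => a⁻¹ * x) '' connectedComponent a ⊆ connectedComponent (a⁻¹ * a) :=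
      Continuous.image_connectedComponent_subset (continuous_mul_left a⁻¹) a
    have hba : b ∈ connectedComponent a := hb ▸ mem_connectedComponent
    have : a⁻¹ * b ∈ (fun x => a⁻¹ * x) '' connectedComponent a := ⟨b, hba, rfl⟩
    simpa using h3 this
  exact (QuotientGroup.eq).2 (by simpa using N.inv_mem (show a⁻¹ * b ∈ N from hmem))


/-- The annihilator of an open subgroup is a compact subset of the Pontryagin dual. -/
lemma isCompact_annihilator_of_isOpen {G : Type*} [CommGroup G] [TopologicalSpace G]
    [IsTopologicalGroup G] (H : Subgroup G) (hH : IsOpen (H : Set G)) :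
    IsCompact {ψ : PontryaginDual G | ∀ h ∈ H, ψ h = 1} := by
  classical
  set T : Set (G → Circle) :=
    {f | (∀ a b, f (a * b) = f a * f b) ∧ ∀ h ∈ H, f h = 1} with hT
  have hTclosed : IsClosed T := by
    rw [hT]
    simp only [Set.setOf_and, Set.setOf_forall]
    refine IsClosed.inter (isClosed_iInter fun a => isClosed_iInter fun b => ?_)
      (isClosed_iInter fun h => isClosed_iInter fun _ => ?_)
    · exact isClosed_eq (continuous_apply (a * b))
        ((continuous_apply a).mul (continuous_apply b))
    · exact isClosed_eq (continuous_apply h) continuous_const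
  have hTcomp : IsCompact T := hTclosed.isCompact
  -- each element of T is automatically continuous (locally constant on cosets of H)
  have hmemnhds : ∀ x : G, (fun y => x * y) '' (H : Set G) ∈ nhds x := by
    intro x
    have hopen : IsOpen ((fun y => x * y) '' (H : Set G)) :=
      (Homeomorph.mulLeft x).isOpen_image.2 hH
    exact hopen.mem_nhds ⟨1, one_mem H, mul_one x⟩
  have hcont : ∀ f : T, Continuous (f : G → Circle) := by
    rintro ⟨f, hfmul, hfH⟩
    rw [continuous_iff_continuousAt]
    intro x
    refine Filter.EventuallyEq.continuousAt (y := f x) ?_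
    refine Filter.eventually_of_mem (hmemnhds x) ?_
    rintro y ⟨h, hh, rfl⟩
    simp [hfmul, hfH h hh]
  let mk : T → PontryaginDual G := fun f =>
    { toFun := (f : G → Circle)
      map_one' := f.2.2 1 (one_mem H)
      map_mul' := f.2.1
      continuous_toFun := hcont f }
  have hmkcont : Continuous mk := by
    apply ContinuousMonoidHom.continuous_of_continuous_uncurry
    rw [continuous_iff_continuousAt]
    rintro ⟨f₀, g₀⟩
    have hS : (Prod.snd : T × G → G) ⁻¹' ((fun y => g₀ * y) '' (H : Set G)) ∈
        nhds (f₀, g₀) :=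
      continuousAt_snd.preimage_mem_nhds (hmemnhds g₀)
    refine ContinuousAt.congr
      (f := fun p : T × G => (p.1 : G → Circle) g₀) ?_ ?_
    · exact ((continuous_apply g₀).comp continuous_subtype_val).comp continuous_fst |>.continuousAt
    · refine Filter.eventually_of_mem hS ?_
      rintro ⟨f, g⟩ hg
      obtain ⟨h, hh, hgh⟩ := hg
      have hgh' : g = g₀ * h := hgh.symm
      show (f : G → Circle) g₀ = (f : G → Circle) g
      rw [hgh', f.2.1, f.2.2 h hh, mul_one]
  have : CompactSpace T := isCompact_iff_compactSpace.1 hTcomp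
  have hrange : IsCompact (Set.range mk) := isCompact_range hmkcont
  have heq : {ψ : PontryaginDual G | ∀ h ∈ H, ψ h = 1} = Set.range mk := by
    ext ψ
    constructor
    · intro hψ
      refine ⟨⟨⇑ψ, fun a b => map_mul ψ a b, hψ⟩, ?_⟩
      exact ContinuousMonoidHom.ext fun x => rfl
    · rintro ⟨f, rfl⟩
      intro h hh
      exact f.2.2 h hh
  rw [heq]
  exact hrange


section Aux

variable {G : Type*} [CommGroup G] [TopologicalSpace G] [IsTopologicalGroup G]

omit [IsTopologicalGroup G] in
lemma pd_pow_apply (φ : PontryaginDual G) (g : G) (n : ℕ) : (φ ^ n) g = (φ g) ^ n := by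
  induction n with
  | zero => rfl
  | succ k ih => rw [pow_succ, pow_succ, ← ih]; rfl

end Aux

/-- For an LCA group `G` with identity component `G₀`, a continuous character
`χ : G → 𝕊¹` annihilates `G₀` if and only if `χ` is a compact element of the Pontryagin dual,
i.e. the closure of the cyclic subgroup generated by `χ` is compact. -/
theorem stmt_0 (G : Type*) [CommGroup G] [TopologicalSpace G] [IsTopologicalGroup G]
    [LocallyCompactSpace G] [T2Space G] (χ : PontryaginDual G) :
    (∀ g ∈ connectedComponent (1 : G), χ g = 1) ↔
      IsCompact (closure ((Subgroup.zpowers χ : Subgroup (PontryaginDual G)) :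
        Set (PontryaginDual G))) := by
  have hreopen : IsOpen {z : Circle | 0 < (z : ℂ).re} :=
    isOpen_lt continuous_const (Complex.continuous_re.comp continuous_subtype_val)
  constructor
  · -- χ annihilates G₀ ⟹ compact closure of zpowers
    intro hχ
    set N := Subgroup.connectedComponentOfOne G with hNdef
    haveI : IsClosed (N : Set G) := isClosed_connectedComponent
    haveI := quotient_connectedComponentOfOne_totallyDisconnected G
    let χ' : G →* Circle := MonoidHomClass.toMonoidHom χ
    have hker : N ≤ χ'.ker := fun g hg => hχ g hg
    let χQ : G ⧸ N →* Circle := QuotientGroup.lift N χ' hker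
    have hcomp : (⇑χQ) ∘ (QuotientGroup.mk : G → G ⧸ N) = ⇑χ := rfl
    have hχQcont : Continuous χQ :=
      (QuotientGroup.isQuotientMap_mk N).continuous_iff.mpr (by rw [hcomp]; exact map_continuous χ)
    have hU : χQ ⁻¹' {z : Circle | 0 < (z : ℂ).re} ∈ nhds (1 : G ⧸ N) := by
      refine (hreopen.preimage hχQcont).mem_nhds ?_
      show 0 < ((χQ 1 : Circle) : ℂ).re
      rw [map_one]
      norm_num
    obtain ⟨W, hWopen, hWsub⟩ := exists_openSubgroup_subset hU
    set H : Subgroup G := W.comap (QuotientGroup.mk' N) with hHdef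
    have hHopen : IsOpen (H : Set G) := hWopen.preimage QuotientGroup.continuous_mk
    have hχH : ∀ h ∈ H, χ h = 1 := by
      intro h hh
      apply circle_eq_one_of_pow_re_pos
      intro n
      have hn : h ^ n ∈ H := pow_mem hh n
      have h2 : 0 < ((χ (h ^ n) : Circle) : ℂ).re := hWsub hn
      rwa [map_pow] at h2
    let A : Subgroup (PontryaginDual G) :=
      { carrier := {ψ : PontryaginDual G | ∀ h ∈ H, ψ h = 1}
        one_mem' := fun h _ => rfl
        mul_mem' := by
          intro a b ha hb h hh
          show a h * b h = 1
          rw [ha h hh, hb h hh, mul_one]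
        inv_mem' := by
          intro a ha h hh
          show (a h)⁻¹ = 1
          rw [ha h hh, inv_one] }
    have hA : IsCompact (A : Set (PontryaginDual G)) := isCompact_annihilator_of_isOpen H hHopen
    have hle : (Subgroup.zpowers χ : Set (PontryaginDual G)) ⊆ (A : Set (PontryaginDual G)) :=
      Subgroup.zpowers_le.2 hχH
    exact hA.of_isClosed_subset isClosed_closure (closure_minimal hle hA.isClosed)
  · -- compact closure of zpowers ⟹ χ annihilates G₀
    intro hK g hg
    haveI : ContinuousEval (PontryaginDual G) G Circle :=
      ContinuousMonoidHom.instContinuousEval G Circle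
    have hEval : Continuous fun p : PontryaginDual G × G => p.1 p.2 := continuous_eval
    have hO : IsOpen {p : PontryaginDual G × G | 0 < ((p.1 p.2 : Circle) : ℂ).re} :=
      hreopen.preimage hEval
    have hsub : closure ((Subgroup.zpowers χ : Subgroup (PontryaginDual G)) :
          Set (PontryaginDual G)) ×ˢ ({1} : Set G) ⊆
        {p : PontryaginDual G × G | 0 < ((p.1 p.2 : Circle) : ℂ).re} := by
      rintro ⟨ψ, x⟩ ⟨-, hx⟩
      rw [Set.mem_singleton_iff] at hx
      subst hx
      show 0 < ((ψ 1 : Circle) : ℂ).re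
      rw [map_one]
      norm_num
    obtain ⟨u, v, huopen, hvopen, hKu, h1v, huv⟩ :=
      generalized_tube_lemma hK isCompact_singleton hO hsub
    have hv1 : ∀ x ∈ v, χ x = 1 := by
      intro x hx
      apply circle_eq_one_of_pow_re_pos
      intro n
      have hmem : χ ^ n ∈ closure ((Subgroup.zpowers χ : Subgroup (PontryaginDual G)) :
          Set (PontryaginDual G)) := subset_closure (Subgroup.npow_mem_zpowers χ n)
      have : (χ ^ n, x) ∈ u ×ˢ v := ⟨hKu hmem, hx⟩
      have h3 := huv this
      have h4 : 0 < (((χ ^ n) x : Circle) : ℂ).re := h3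
      rwa [pd_pow_apply] at h4
    set K' : Subgroup G := (MonoidHomClass.toMonoidHom χ).ker with hK'def
    have hvK : v ⊆ (K' : Set G) := fun x hx => hv1 x hx
    have hKnhds : (K' : Set G) ∈ nhds (1 : G) :=
      Filter.mem_of_superset (hvopen.mem_nhds (h1v rfl)) hvK
    have hKopen : IsOpen (K' : Set G) := Subgroup.isOpen_of_mem_nhds K' hKnhds
    have hKclosed : IsClosed (K' : Set G) := Subgroup.isClosed_of_isOpen K' hKopen
    have hcc : connectedComponent (1 : G) ⊆ (K' : Set G) :=
      IsClopen.connectedComponent_subset ⟨hKclosed, hKopen⟩ (one_mem K')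
    exact hcc hg
end

section
/- Let G be an LCA group. Then every element of G is a compact element if and only if G is the union of its compact open subgroups. -/
open Pointwise

/-- Closure of the subgroup generated by a finite set of compact elements is compact. -/
private lemma aux_fin {G : Type*} [CommGroup G] [TopologicalSpace G] [IsTopologicalGroup G]
    [T2Space G] (F : Finset G)
    (h : ∀ f ∈ F, IsCompact (closure ((Subgroup.zpowers f : Subgroup G) : Set G))) :
    IsCompact (closure ((Subgroup.closure (F : Set G) : Subgroup G) : Set G)) := by
  classical
  induction F using Finset.induction with
  | empty =>
      simp only [Finset.coe_empty, Subgroup.closure_empty, Subgroup.coe_bot]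
      rw [closure_singleton]
      exact isCompact_singleton
  | @insert a s ha ih =>
      have hs : IsCompact (closure ((Subgroup.closure (s : Set G) : Subgroup G) : Set G)) :=
        ih fun f hf => h f (Finset.mem_insert_of_mem hf)
      have hA : IsCompact (closure ((Subgroup.zpowers a : Subgroup G) : Set G)) :=
        h a (Finset.mem_insert_self a s)
      have hprod : IsCompact
          (closure ((Subgroup.zpowers a : Subgroup G) : Set G) *
            closure ((Subgroup.closure (s : Set G) : Subgroup G) : Set G)) := hA.mul hs
      have hclosed : IsClosed
          (closure ((Subgroup.zpowers a : Subgroup G) : Set G) *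
            closure ((Subgroup.closure (s : Set G) : Subgroup G) : Set G)) :=
        hprod.isClosed
      have hsub : ((Subgroup.closure ((insert a s : Finset G) : Set G) : Subgroup G) : Set G) ⊆
          closure ((Subgroup.zpowers a : Subgroup G) : Set G) *
            closure ((Subgroup.closure (s : Set G) : Subgroup G) : Set G) := by
        rw [Finset.coe_insert, ← Set.singleton_union, Subgroup.closure_union,
          ← Subgroup.zpowers_eq_closure]
        rw [Subgroup.mul_normal]
        exact Set.mul_subset_mul subset_closure subset_closure
      exact hprod.of_isClosed_subset isClosed_closure
        (closure_minimal hsub hclosed)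

/-- An LCA group `G` has every element compact (i.e. `G` is elliptic) if and only
if `G` is the union of its compact open subgroups. -/
theorem stmt_2 (G : Type*) [CommGroup G] [TopologicalSpace G] [IsTopologicalGroup G]
    [LocallyCompactSpace G] [T2Space G] :
    (∀ x : G, IsCompact (closure ((Subgroup.zpowers x : Subgroup G) : Set G))) ↔
      (⋃ H ∈ {H : Subgroup G | IsCompact (H : Set G) ∧ IsOpen (H : Set G)}, (H : Set G)) =
        Set.univ := by
  constructor
  · intro h
    rw [Set.eq_univ_iff_forall]
    intro x
    simp only [Set.mem_iUnion, Set.mem_setOf_eq, SetLike.mem_coe, exists_prop]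
    -- pick a compact neighborhood of 1
    obtain ⟨K, hKc, hKn⟩ := exists_compact_mem_nhds (1 : G)
    set V : Set G := (K ∪ K⁻¹) ∪ ({x, x⁻¹} : Set G) with hV
    have hVc : IsCompact V := ((hKc.union hKc.inv).union (Set.toFinite ({x, x⁻¹} : Set G)).isCompact)
    have hVn : V ∈ nhds (1 : G) := by
      refine Filter.mem_of_superset hKn ?_
      intro y hy; exact Or.inl (Or.inl hy)
    have hVsymm : V⁻¹ = V := by
      rw [hV]
      simp only [Set.union_inv, Set.inv_insert, Set.inv_singleton, inv_inv]
      rw [Set.union_comm K⁻¹ K, Set.pair_comm x⁻¹ x]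
    have hxV : x ∈ V := Or.inr (Set.mem_insert _ _)
    have h1V : (1 : G) ∈ V := mem_of_mem_nhds hVn
    -- cover V*V by finitely many translates of the interior of V
    have hVVc : IsCompact (V * V) := hVc.mul hVc
    have hint : (1 : G) ∈ interior V := mem_interior_iff_mem_nhds.2 hVn
    obtain ⟨t, htsub, htfin, htcov⟩ := hVVc.elim_finite_subcover_image
      (ι := G) (b := fun g => g ∈ V * V) (c := fun g => g • interior V)
      (fun g _ => isOpen_interior.smul g)
      (fun y hy => Set.mem_biUnion hy (by simpa using Set.smul_mem_smul_set (a:=y) hint))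
    -- the closure of the subgroup generated by t is compact
    set S : Subgroup G := Subgroup.closure t with hS
    set C : Set G := closure (S : Set G) with hC
    have hCc : IsCompact C := by
      have := aux_fin htfin.toFinset (fun f hf => h f)
      rwa [htfin.coe_toFinset] at this
    -- C is the carrier of a subgroup
    have hCsub : ∀ a b : G, a ∈ C → b ∈ C → a * b ∈ C := fun a b ha hb =>
      S.topologicalClosure.mul_mem ha hb
    have hCinv : ∀ a : G, a ∈ C → a⁻¹ ∈ C := fun a ha => S.topologicalClosure.inv_mem ha
    have h1C : (1 : G) ∈ C := subset_closure S.one_mem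
    have htC : ∀ g ∈ t, g ∈ C := fun g hg => subset_closure (Subgroup.subset_closure hg)
    -- key step: V*V ⊆ C * V
    have hVV : V * V ⊆ C * V := by
      intro y hy
      obtain ⟨g, hgt, hgy⟩ := Set.mem_iUnion₂.1 (htcov hy)
      obtain ⟨v, hv, rfl⟩ := hgy
      exact ⟨g, htC g hgt, v, interior_subset hv, rfl⟩
    -- so the subgroup generated by V is contained in C * V
    set H : Subgroup G := Subgroup.closure V with hH
    have hHsub : (H : Set G) ⊆ C * V := by
      intro y hy
      refine Subgroup.closure_induction (p := fun g _ => g ∈ C * V)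
        (fun v hv => ⟨1, h1C, v, hv, one_mul v⟩)
        ⟨1, h1C, 1, h1V, one_mul 1⟩ ?_ ?_ hy
      · rintro a b _ _ ⟨c1, hc1, v1, hv1, rfl⟩ ⟨c2, hc2, v2, hv2, rfl⟩
        obtain ⟨c3, hc3, v3, hv3, hv12⟩ := hVV (Set.mul_mem_mul hv1 hv2)
        refine ⟨c1 * c2 * c3, hCsub _ _ (hCsub _ _ hc1 hc2) hc3, v3, hv3, ?_⟩
        have h12 : c1 * v1 * (c2 * v2) = c1 * c2 * (v1 * v2) := mul_mul_mul_comm c1 v1 c2 v2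
        simp only at hv12 ⊢
        rw [h12, ← hv12, mul_assoc]
      · rintro a _ ⟨c, hc, v, hv, rfl⟩
        refine ⟨c⁻¹, hCinv c hc, v⁻¹, ?_, by rw [mul_inv]⟩
        rw [← hVsymm]; exact Set.inv_mem_inv.2 hv
    -- H is open
    have hHopen : IsOpen (H : Set G) :=
      Subgroup.isOpen_of_mem_nhds H (Filter.mem_of_superset hVn Subgroup.subset_closure)
    -- H is closed, being an open subgroup
    have hHclosed : IsClosed (H : Set G) :=
      (OpenSubgroup.mk H hHopen : OpenSubgroup G).isClosed
    have hHc : IsCompact (H : Set G) := (hCc.mul hVc).of_isClosed_subset hHclosed hHsub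
    exact ⟨H, ⟨hHc, hHopen⟩, Subgroup.subset_closure hxV⟩
  · intro h x
    have hx : x ∈ (⋃ H ∈ {H : Subgroup G | IsCompact (H : Set G) ∧ IsOpen (H : Set G)},
        (H : Set G)) := h ▸ Set.mem_univ x
    simp only [Set.mem_iUnion, Set.mem_setOf_eq, SetLike.mem_coe, exists_prop] at hx
    obtain ⟨H, ⟨hHc, hHopen⟩, hxH⟩ := hx
    have hHclosed : IsClosed (H : Set G) :=
      (OpenSubgroup.mk H hHopen : OpenSubgroup G).isClosed
    have hsub : closure ((Subgroup.zpowers x : Subgroup G) : Set G) ⊆ (H : Set G) := by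
      refine closure_minimal ?_ hHclosed
      rintro y hy
      obtain ⟨n, rfl⟩ := hy
      exact H.zpow_mem hxH n
    exact hHc.of_isClosed_subset isClosed_closure hsub
end

section
/- Let G be an elliptic LCA group. Then every compact subset of G is contained in a compact open subgroup of G. In particular, the closure of every compactly generated subgroup of G is compact. -/
open Set Topology Pointwise

/-- Finitely generated subgroups of an elliptic group are contained in a compact set. -/
private lemma fg_compact {G : Type*} [CommGroup G] [TopologicalSpace G] [IsTopologicalGroup G]
    (hell : ∀ x : G, IsCompact (closure ((Subgroup.zpowers x : Subgroup G) : Set G)))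
    (F : Finset G) :
    ∃ C : Set G, IsCompact C ∧ ((Subgroup.closure (F : Set G) : Subgroup G) : Set G) ⊆ C := by
  classical
  induction F using Finset.induction_on with
  | empty =>
      exact ⟨{1}, isCompact_singleton, by simp [Subgroup.closure_empty]⟩
  | @insert a F ha ih =>
      obtain ⟨C, hC, hsub⟩ := ih
      refine ⟨closure ((Subgroup.zpowers a : Subgroup G) : Set G) * C,
        (hell a).mul hC, ?_⟩
      have : Subgroup.closure ((insert a F : Finset G) : Set G)
          = Subgroup.zpowers a ⊔ Subgroup.closure (F : Set G) := by
        rw [Finset.coe_insert, Set.insert_eq, Subgroup.closure_union,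
          Subgroup.zpowers_eq_closure]
      rw [this]
      calc (↑(Subgroup.zpowers a ⊔ Subgroup.closure (F : Set G)) : Set G)
          = (Subgroup.zpowers a : Set G) * (Subgroup.closure (F : Set G) : Set G) :=
            Subgroup.mul_normal _ _
        _ ⊆ closure ((Subgroup.zpowers a : Subgroup G) : Set G) * C :=
            Set.mul_subset_mul subset_closure hsub

/-- If `G` is an elliptic LCA group (every element is a compact element), then
every compact subset of `G` is contained in a compact open subgroup; in particular the closure of
every compactly generated subgroup is compact. -/
theorem stmt_3 (G : Type*) [CommGroup G] [TopologicalSpace G] [IsTopologicalGroup G]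
    [LocallyCompactSpace G] [T2Space G]
    (hell : ∀ x : G, IsCompact (closure ((Subgroup.zpowers x : Subgroup G) : Set G))) :
    (∀ K : Set G, IsCompact K →
        ∃ H : Subgroup G, IsCompact (H : Set G) ∧ IsOpen (H : Set G) ∧ K ⊆ (H : Set G)) ∧
      ∀ K : Set G, IsCompact K → IsCompact (closure ((Subgroup.closure K : Subgroup G) : Set G)) := by
  classical
  have main : ∀ K : Set G, IsCompact K →
      ∃ H : Subgroup G, IsCompact (H : Set G) ∧ IsOpen (H : Set G) ∧ K ⊆ (H : Set G) := by
    intro K hK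
    -- a compact symmetric neighborhood of 1
    obtain ⟨W, hWc, hWn⟩ := exists_compact_mem_nhds (1 : G)
    set V : Set G := W ∩ W⁻¹ with hV
    have hVn : V ∈ 𝓝 (1 : G) := Filter.inter_mem hWn (inv_mem_nhds_one G hWn)
    have hVc : IsCompact V := hWc.inter_right (hWc.isClosed.inv)
    have hVsymm : V⁻¹ = V := by
      ext x; simp [hV, Set.mem_inter_iff, and_comm]
    have h1V : (1 : G) ∈ V := mem_of_mem_nhds hVn
    set U : Set G := interior V with hU
    have hUo : IsOpen U := isOpen_interior
    have h1U : (1 : G) ∈ U := mem_interior_iff_mem_nhds.2 hVn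
    have hUV : U ⊆ V := interior_subset
    -- translates of U cover everything
    have cover : ∀ s : Set G, s ⊆ ⋃ x : G, (fun y => x * y) '' U := by
      intro s z _
      exact Set.mem_iUnion.2 ⟨z, ⟨1, h1U, mul_one z⟩⟩
    have opentrans : ∀ x : G, IsOpen ((fun y => x * y) '' U) := fun x =>
      (Homeomorph.mulLeft x).isOpenMap U hUo
    -- finite F₁ with V*V ⊆ F₁ * V
    obtain ⟨F₁, hF₁⟩ := (hVc.mul hVc).elim_finite_subcover _ opentrans (cover _)
    -- finite F₂ with K ⊆ F₂ * V
    obtain ⟨F₂, hF₂⟩ := hK.elim_finite_subcover _ opentrans (cover _)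
    set S : Finset G := F₁ ∪ F₂ with hS
    set N : Subgroup G := Subgroup.closure (S : Set G) with hN
    -- V*V ⊆ N * V
    have hVV : V * V ⊆ (N : Set G) * V := by
      intro z hz
      obtain ⟨i, hi, y, hy, rfl⟩ := Set.mem_iUnion₂.1 (hF₁ hz)
      exact ⟨i, Subgroup.subset_closure (by simp [hS, Finset.mem_coe.2 hi]), y, hUV hy, rfl⟩
    set H : Subgroup G := Subgroup.closure ((S : Set G) ∪ V) with hH
    have hHopen : IsOpen (H : Set G) :=
      Subgroup.isOpen_of_mem_nhds H (Filter.mem_of_superset hVn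
        (fun x hx => Subgroup.subset_closure (Or.inr hx)))
    -- every element of H lies in N * V
    have key : (H : Set G) ⊆ (N : Set G) * V := by
      intro x hx
      have hx' : x ∈ Submonoid.closure (((S : Set G) ∪ V) ∪ ((S : Set G) ∪ V)⁻¹) := by
        have hx2 : x ∈ (Subgroup.closure ((S : Set G) ∪ V)).toSubmonoid := hx
        rwa [Subgroup.closure_toSubmonoid] at hx2
      obtain ⟨l, hl, rfl⟩ := Submonoid.exists_list_of_mem_closure hx'
      clear hx hx'
      induction l with
      | nil =>
          exact ⟨1, one_mem N, 1, h1V, by simp⟩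
      | cons y t iht =>
          obtain ⟨g, hg, v, hv, hgv⟩ := iht (fun z hz => hl z (List.mem_cons_of_mem _ hz))
          have hgv : g * v = t.prod := hgv
          have hy := hl y ((List.mem_cons_self (a := y) (l := t)))
          have hyc : y ∈ (N : Set G) ∨ y ∈ V := by
            rcases hy with h | h
            · rcases h with h | h
              · exact Or.inl (Subgroup.subset_closure h)
              · exact Or.inr h
            · rcases Set.mem_inv.1 h with h | h
              · exact Or.inl ((Subgroup.inv_mem_iff N).1 (Subgroup.subset_closure h))
              · exact Or.inr (by rw [← hVsymm]; exact Set.mem_inv.2 h)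
          rcases hyc with h | h
          · refine ⟨y * g, mul_mem h hg, v, hv, ?_⟩
            show y * g * v = (y :: t).prod
            rw [List.prod_cons, ← hgv, mul_assoc]
          · obtain ⟨g', hg', v', hv', hgv'⟩ := hVV (Set.mul_mem_mul h hv)
            have hgv' : g' * v' = y * v := hgv'
            refine ⟨g * g', mul_mem hg hg', v', hv', ?_⟩
            show g * g' * v' = (y :: t).prod
            rw [List.prod_cons, ← hgv, mul_assoc, hgv', mul_left_comm]
    -- N sits in a compact set
    obtain ⟨C, hCc, hNC⟩ := fg_compact hell S
    have hHc : IsCompact (H : Set G) := by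
      refine IsCompact.of_isClosed_subset (hCc.mul hVc) (H.isClosed_of_isOpen hHopen) ?_
      exact key.trans (Set.mul_subset_mul_right hNC)
    refine ⟨H, hHc, hHopen, ?_⟩
    intro k hk
    obtain ⟨i, hi, y, hy, rfl⟩ := Set.mem_iUnion₂.1 (hF₂ hk)
    exact mul_mem (Subgroup.subset_closure (Or.inl (by simp [hS, Finset.mem_coe.2 hi])))
      (Subgroup.subset_closure (Or.inr (hUV hy)))
  refine ⟨main, fun K hK => ?_⟩
  obtain ⟨H, hHc, hHo, hKH⟩ := main K hK
  refine IsCompact.of_isClosed_subset hHc isClosed_closure ?_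
  have : Subgroup.closure K ≤ H := Subgroup.closure_le H |>.2 hKH
  calc closure ((Subgroup.closure K : Subgroup G) : Set G)
      ⊆ closure (H : Set G) := closure_mono this
    _ = (H : Set G) := (H.isClosed_of_isOpen hHo).closure_eq
end

section
/- Let R be a locally compact Hausdorff topological ring and M a locally compact Hausdorff topological left R-module. Then the map from (PontryaginDual M) × R to PontryaginDual M sending (χ, r) to the character χ^r : m ↦ χ(r·m) is continuous, where the Pontryagin dual carries the compact-open topology. In particular, this map makes the Pontryagin dual of M a topological right R-module. -/
/-- For a topological module `M` over `R`, the character `χ^r : m ↦ χ (r • m)`. -/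
noncomputable def charPow {R M : Type*} [Semiring R] [AddCommGroup M] [Module R M]
    [TopologicalSpace M] [ContinuousConstSMul R M] (r : R)
    (χ : PontryaginDual (Multiplicative M)) : PontryaginDual (Multiplicative M) :=
  ContinuousMonoidHom.comp χ
    { toFun := fun m => Multiplicative.ofAdd (r • m.toAdd)
      map_one' := by simp
      map_mul' := fun x y => by simp [smul_add]
      continuous_toFun := show Continuous fun m : M => r • m from continuous_const_smul r }

/-- If `R` is a locally compact Hausdorff topological ring and `M` a locally
compact Hausdorff topological left `R`-module, then the map `(χ, r) ↦ χ^r` from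
`PontryaginDual M × R` to `PontryaginDual M` is continuous (the dual carrying the compact-open
topology); in particular it makes the Pontryagin dual of `M` a topological right `R`-module. -/
theorem stmt_4 (R M : Type*) [Ring R] [TopologicalSpace R] [IsTopologicalRing R]
    [LocallyCompactSpace R] [T2Space R]
    [AddCommGroup M] [Module R M] [TopologicalSpace M] [IsTopologicalAddGroup M]
    [ContinuousSMul R M] [LocallyCompactSpace M] [T2Space M] :
    Continuous fun p : PontryaginDual (Multiplicative M) × R => charPow p.2 p.1 := by
  haveI : LocallyCompactSpace (Multiplicative M) := ‹LocallyCompactSpace M›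
  haveI : LocallyCompactPair (Multiplicative M) Circle := inferInstance
  haveI hce : ContinuousEval (PontryaginDual (Multiplicative M)) (Multiplicative M) Circle :=
    ContinuousMonoidHom.instContinuousEval (Multiplicative M) Circle
  apply ContinuousMonoidHom.continuous_of_continuous_uncurry
  have hsmul : Continuous fun q : (PontryaginDual (Multiplicative M) × R) × Multiplicative M =>
      (Multiplicative.ofAdd ((q.1.2 • q.2.toAdd : M)) : Multiplicative M) := by
    exact (continuous_fst.snd.smul continuous_snd :
      Continuous fun q : (PontryaginDual (Multiplicative M) × R) × Multiplicative M =>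
        (q.1.2 • q.2.toAdd : M))
  exact (hce.continuous_eval).comp ((continuous_fst.fst).prodMk hsmul)
end

section
/- Let Σ be a set of prime numbers, let S be the multiplicative submonoid of ℕ generated by Σ, let Q be a locally compact Hausdorff topological module over the finite adele ring A_{Σ,f} = ∏'_{q∈Σ}(ℚ_q, ℤ_q), and let C be a compact open subgroup of Q. Then for every x ∈ Q there exists s ∈ S such that s·x ∈ C; that is, Q = ⋃_{s∈S} (1/s)·C, so Q is generated by C over ℤ[S⁻¹] and in particular Q is σ-compact. -/
open Filter Set

instance (p : Nat.Primes) : Fact (p : ℕ).Prime := ⟨p.2⟩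

/-- The set of `p`-adic integers inside `ℚ_p`. -/
def padicIntSet (p : Nat.Primes) : Set ℚ_[(p : ℕ)] := {x | ‖x‖ ≤ 1}

/-- The finite adele ring associated to a set of primes `P`: the restricted product
`∏'_{q ∈ P} (ℚ_q, ℤ_q)`, as a subring of the full product. -/
def finiteAdeleSubring (P : Set Nat.Primes) : Subring ((q : P) → ℚ_[(q.1 : ℕ)]) where
  carrier := {x | ∀ᶠ q in cofinite, x q ∈ padicIntSet q.1}
  zero_mem' := by
    show ∀ᶠ q : ↥P in cofinite, (0 : (q : ↥P) → ℚ_[(q.1 : ℕ)]) q ∈ padicIntSet q.1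
    refine Eventually.of_forall fun q => ?_
    show ‖(0 : ℚ_[(q.1.1 : ℕ)])‖ ≤ 1
    simp
  one_mem' := by
    show ∀ᶠ q : ↥P in cofinite, (1 : (q : ↥P) → ℚ_[(q.1 : ℕ)]) q ∈ padicIntSet q.1
    refine Eventually.of_forall fun q => ?_
    show ‖(1 : ℚ_[(q.1.1 : ℕ)])‖ ≤ 1
    simp
  add_mem' := by
    intro a b ha hb
    have ha' : ∀ᶠ q in cofinite, a q ∈ padicIntSet q.1 := ha
    have hb' : ∀ᶠ q in cofinite, b q ∈ padicIntSet q.1 := hb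
    refine (ha'.and hb').mono fun q h => ?_
    exact le_trans (Padic.nonarchimedean _ _) (max_le (show ‖a q‖ ≤ 1 from h.1) (show ‖b q‖ ≤ 1 from h.2))
  neg_mem' := by
    intro a ha
    have ha' : ∀ᶠ q in cofinite, a q ∈ padicIntSet q.1 := ha
    refine ha'.mono fun q h => ?_
    show ‖-(a q)‖ ≤ 1
    simpa using (show ‖a q‖ ≤ 1 from h)
  mul_mem' := by
    intro a b ha hb
    have ha' : ∀ᶠ q in cofinite, a q ∈ padicIntSet q.1 := ha
    have hb' : ∀ᶠ q in cofinite, b q ∈ padicIntSet q.1 := hb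
    refine (ha'.and hb').mono fun q h => ?_
    show ‖a q * b q‖ ≤ 1
    calc ‖a q * b q‖ = ‖a q‖ * ‖b q‖ := norm_mul _ _
    _ ≤ 1 := mul_le_one₀ h.1 (norm_nonneg _) h.2

/-- The finite adele ring, as a type. -/
def FiniteAdeles (P : Set Nat.Primes) := ↥(finiteAdeleSubring P)

noncomputable instance (P : Set Nat.Primes) : CommRing (FiniteAdeles P) :=
  inferInstanceAs (CommRing ↥(finiteAdeleSubring P))

/-- Underlying element of the product. -/
def FiniteAdeles.val (P : Set Nat.Primes) : FiniteAdeles P → ((q : P) → ℚ_[(q.1 : ℕ)]) :=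
  Subtype.val

/-- The restricted product topology on the finite adele ring: generated by the open boxes
`∏ U_q` with every `U_q` open and `U_q = ℤ_q` for all but finitely many `q`. -/
instance (P : Set Nat.Primes) : TopologicalSpace (FiniteAdeles P) :=
  TopologicalSpace.generateFrom
    {s | ∃ U : (q : P) → Set ℚ_[(q.1 : ℕ)], (∀ q, IsOpen (U q)) ∧
      (∀ᶠ q in cofinite, U q = padicIntSet q.1) ∧ s = FiniteAdeles.val P ⁻¹' Set.pi univ U}



section Aux

variable {P : Set Nat.Primes}

lemma isOpen_padicIntSet (p : Nat.Primes) : IsOpen (padicIntSet p) := by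
  rw [Metric.isOpen_iff]
  intro x hx
  have hx' : ‖x‖ ≤ 1 := hx
  refine ⟨1, one_pos, fun y hy => ?_⟩
  have h1 : ‖y - x‖ < 1 := by simpa [dist_eq_norm] using hy
  have hyx : y = (y - x) + x := by ring
  show ‖y‖ ≤ 1
  rw [hyx]
  exact le_trans (Padic.nonarchimedean _ _) (max_le h1.le hx')

lemma natCast_mem_padicIntSet (p : Nat.Primes) (m : ℕ) :
    ((m : ℚ_[(p : ℕ)]) ∈ padicIntSet p) := by
  have := Padic.norm_int_le_one (p := (p : ℕ)) (m : ℤ)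
  show ‖((m : ℕ) : ℚ_[(p : ℕ)])‖ ≤ 1
  push_cast at this
  exact this

/-- The generating set of the restricted product topology. -/
def boxGens (P : Set Nat.Primes) : Set (Set (FiniteAdeles P)) :=
  {s | ∃ U : (q : P) → Set ℚ_[(q.1 : ℕ)], (∀ q, IsOpen (U q)) ∧
    (∀ᶠ q in cofinite, U q = padicIntSet q.1) ∧ s = FiniteAdeles.val P ⁻¹' Set.pi univ U}

lemma exists_box {t : Set (FiniteAdeles P)}
    (ht : TopologicalSpace.GenerateOpen (boxGens P) t) :
    ∀ x ∈ t, ∃ U : (q : P) → Set ℚ_[(q.1 : ℕ)], (∀ q, IsOpen (U q)) ∧ (∀ q, x.1 q ∈ U q) ∧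
      (∀ᶠ q in cofinite, U q = padicIntSet q.1) ∧
      FiniteAdeles.val P ⁻¹' Set.pi univ U ⊆ t := by
  classical
  induction ht with
  | basic s hs =>
      obtain ⟨U, hUo, hUc, rfl⟩ := hs
      intro x hx
      exact ⟨U, hUo, fun q => hx q (mem_univ q), hUc, subset_rfl⟩
  | univ =>
      intro x _
      refine ⟨fun q => if x.1 q ∈ padicIntSet q.1 then padicIntSet q.1 else univ,
        ?_, ?_, ?_, subset_univ _⟩
      · intro q
        show IsOpen (if x.1 q ∈ padicIntSet q.1 then padicIntSet q.1 else univ)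
        split_ifs
        · exact isOpen_padicIntSet _
        · exact isOpen_univ
      · intro q
        show x.1 q ∈ (if x.1 q ∈ padicIntSet q.1 then padicIntSet q.1 else univ)
        split_ifs with h
        · exact h
        · exact mem_univ _
      · have hx2 : ∀ᶠ q : ↥P in cofinite, x.1 q ∈ padicIntSet q.1 := x.2
        exact hx2.mono fun q hq => if_pos hq
  | inter s u hs hu ihs ihu =>
      intro x hx
      obtain ⟨U, hUo, hUm, hUc, hUs⟩ := ihs x hx.1
      obtain ⟨V, hVo, hVm, hVc, hVs⟩ := ihu x hx.2
      refine ⟨fun q => U q ∩ V q, fun q => (hUo q).inter (hVo q), fun q => ⟨hUm q, hVm q⟩,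
        (hUc.and hVc).mono fun q h => show U q ∩ V q = _ by rw [h.1, h.2, inter_self], fun y hy =>
          ⟨hUs fun q hq => (hy q hq).1, hVs fun q hq => (hy q hq).2⟩⟩
  | sUnion S hS ih =>
      intro x hx
      obtain ⟨u, huS, hxu⟩ := hx
      obtain ⟨U, h1, h2, h3, h4⟩ := ih u huS x hxu
      exact ⟨U, h1, h2, h3, h4.trans (subset_sUnion_of_mem huS)⟩

lemma exists_pow_ball (p : Nat.Primes) {U : Set ℚ_[(p : ℕ)]} (hU : IsOpen U)
    (h0 : (0 : ℚ_[(p : ℕ)]) ∈ U) :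
    ∃ n : ℕ, ∀ y : ℚ_[(p : ℕ)], ‖y‖ ≤ ((p : ℕ) : ℝ)⁻¹ ^ n → y ∈ U := by
  obtain ⟨ε, hε, hb⟩ := Metric.isOpen_iff.mp hU 0 h0
  have hp1 : (1 : ℝ) < ((p : ℕ) : ℝ) := by exact_mod_cast p.2.one_lt
  have hlt : ((p : ℕ) : ℝ)⁻¹ < 1 := inv_lt_one_of_one_lt₀ hp1
  have hnn : (0 : ℝ) ≤ ((p : ℕ) : ℝ)⁻¹ := inv_nonneg.mpr (by positivity)
  obtain ⟨n, hn⟩ := exists_pow_lt_of_lt_one hε hlt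
  exact ⟨n, fun y hy => hb (by simpa [dist_eq_norm] using lt_of_le_of_lt hy hn)⟩

lemma finiteAdeles_natCast_apply (m : ℕ) (q : ↥P) :
    FiniteAdeles.val P (m : FiniteAdeles P) q = ((m : ℕ) : ℚ_[(q.1 : ℕ)]) := by
  induction m with
  | zero =>
      show FiniteAdeles.val P 0 q = _
      simp only [Nat.cast_zero]
      rfl
  | succ k ih =>
      have h0 : ((k + 1 : ℕ) : FiniteAdeles P) = (k : FiniteAdeles P) + 1 := by
        push_cast; ring
      rw [h0]
      have h1 : FiniteAdeles.val P ((k : FiniteAdeles P) + 1) q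
          = FiniteAdeles.val P (k : FiniteAdeles P) q + 1 := rfl
      rw [h1, ih]
      push_cast
      ring

end Aux

/-- If `Q` is a locally compact Hausdorff topological module over the finite
adele ring `A_{Σ,f}` and `C` is a compact open subgroup of `Q`, then every `x ∈ Q` satisfies
`s • x ∈ C` for some `s` in the multiplicative submonoid `S` of `ℕ` generated by `Σ`; that is,
`Q = ⋃_{s ∈ S} (1/s)·C`, so `Q` is generated by `C` over `ℤ[S⁻¹]`, and in particular `Q` is
σ-compact. -/
theorem stmt_7 (P : Set Nat.Primes) (Q : Type*) [AddCommGroup Q]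
    [Module (FiniteAdeles P) Q] [TopologicalSpace Q] [IsTopologicalAddGroup Q]
    [ContinuousSMul (FiniteAdeles P) Q] [LocallyCompactSpace Q] [T2Space Q]
    (C : AddSubgroup Q) (hCc : IsCompact (C : Set Q)) (hCo : IsOpen (C : Set Q)) :
    (∀ x : Q, ∃ s ∈ Submonoid.closure ((fun p : Nat.Primes => (p : ℕ)) '' P), s • x ∈ C) ∧
      SigmaCompactSpace Q := by
  classical
  have key : ∀ x : Q, ∃ s, s ∈ Submonoid.closure ((fun p : Nat.Primes => (p : ℕ)) '' P) ∧
      0 < s ∧ s • x ∈ C := by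
    intro x
    have hco : Continuous fun a : FiniteAdeles P => a • x :=
      continuous_id.smul continuous_const
    have ht : IsOpen ((fun a : FiniteAdeles P => a • x) ⁻¹' C) := hCo.preimage hco
    have ht' : TopologicalSpace.GenerateOpen (boxGens P)
        ((fun a : FiniteAdeles P => a • x) ⁻¹' C) := ht
    have h0mem : (0 : FiniteAdeles P) ∈ (fun a : FiniteAdeles P => a • x) ⁻¹' C := by
      show (0 : FiniteAdeles P) • x ∈ C
      rw [zero_smul]; exact C.zero_mem
    obtain ⟨U, hUo, hUm, hUc, hUs⟩ := exists_box ht' 0 h0mem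
    have h0U : ∀ q : ↥P, (0 : ℚ_[(q.1 : ℕ)]) ∈ U q := fun q => hUm q
    choose n hn using fun q : ↥P => exists_pow_ball q.1 (hUo q) (h0U q)
    have hFfin : {q : ↥P | ¬ U q = padicIntSet q.1}.Finite := eventually_cofinite.mp hUc
    set F := hFfin.toFinset with hF
    set s := ∏ q ∈ F, (q.1 : ℕ) ^ n q with hs
    have hscl : s ∈ Submonoid.closure ((fun p : Nat.Primes => (p : ℕ)) '' P) := by
      refine Submonoid.prod_mem _ fun q hq => ?_
      exact pow_mem (Submonoid.subset_closure (Set.mem_image_of_mem _ q.2)) _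
    have hspos : 0 < s := Finset.prod_pos fun q _ => pow_pos q.1.2.pos _
    have hmem : (s : FiniteAdeles P) ∈ FiniteAdeles.val P ⁻¹' Set.pi univ U := by
      intro q _
      rw [finiteAdeles_natCast_apply]
      by_cases hqF : q ∈ F
      · apply hn q
        have hfac : s = (q.1 : ℕ) ^ n q * ∏ r ∈ F.erase q, (r.1 : ℕ) ^ n r :=
          (Finset.mul_prod_erase F _ hqF).symm
        rw [hfac, Nat.cast_mul, Nat.cast_pow, norm_mul, norm_pow, Padic.norm_p]
        have hr : ‖((∏ r ∈ F.erase q, (r.1 : ℕ) ^ n r : ℕ) : ℚ_[(q.1 : ℕ)])‖ ≤ 1 :=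
          natCast_mem_padicIntSet q.1 _
        have hnn : (0 : ℝ) ≤ ((q.1 : ℕ) : ℝ)⁻¹ ^ n q :=
          pow_nonneg (inv_nonneg.mpr (by positivity)) _
        calc ((q.1 : ℕ) : ℝ)⁻¹ ^ n q * ‖((∏ r ∈ F.erase q, (r.1 : ℕ) ^ n r : ℕ) : ℚ_[(q.1 : ℕ)])‖
            ≤ ((q.1 : ℕ) : ℝ)⁻¹ ^ n q * 1 := by
              exact mul_le_mul_of_nonneg_left hr hnn
          _ = ((q.1 : ℕ) : ℝ)⁻¹ ^ n q := mul_one _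
      · have hUq : U q = padicIntSet q.1 := by
          by_contra hcon
          exact hqF (hFfin.mem_toFinset.mpr hcon)
        rw [hUq]
        exact natCast_mem_padicIntSet q.1 s
    refine ⟨s, hscl, hspos, ?_⟩
    have := hUs hmem
    rwa [← Nat.cast_smul_eq_nsmul (FiniteAdeles P)]
  have hinv : ∀ s : ℕ, 0 < s → ∃ a : FiniteAdeles P, a * (s : FiniteAdeles P) = 1 := by
    intro s hspos
    have hsne : ∀ q : ↥P, ((s : ℕ) : ℚ_[(q.1 : ℕ)]) ≠ 0 := fun q => by
      exact_mod_cast Nat.cast_ne_zero.mpr hspos.ne'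
    have hmem : (fun q : ↥P => ((s : ℕ) : ℚ_[(q.1 : ℕ)])⁻¹) ∈ finiteAdeleSubring P := by
      show ∀ᶠ q : ↥P in cofinite, _ ∈ padicIntSet q.1
      rw [eventually_cofinite]
      have hsub : {q : ↥P | ¬ (((s : ℕ) : ℚ_[(q.1 : ℕ)])⁻¹ ∈ padicIntSet q.1)}
          ⊆ {q : ↥P | (q.1 : ℕ) ∣ s} := by
        intro q hq
        by_contra hdvd
        apply hq
        show ‖(((s : ℕ) : ℚ_[(q.1 : ℕ)]))⁻¹‖ ≤ 1
        have h1 : ¬ ‖((s : ℤ) : ℚ_[(q.1 : ℕ)])‖ < 1 := by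
          rw [Padic.norm_intCast_lt_one_iff]
          exact_mod_cast hdvd
        have h2 : ‖((s : ℕ) : ℚ_[(q.1 : ℕ)])‖ ≤ 1 := natCast_mem_padicIntSet q.1 s
        have h3 : ‖((s : ℕ) : ℚ_[(q.1 : ℕ)])‖ = 1 := by
          push_cast at h1
          exact le_antisymm h2 (not_lt.mp h1)
        rw [norm_inv, h3]
        norm_num
      refine Set.Finite.subset ?_ hsub
      have hinj : Function.Injective (fun q : ↥P => (q.1 : ℕ)) :=
        Nat.Primes.coe_nat_injective.comp Subtype.val_injective
      have : {q : ↥P | (q.1 : ℕ) ∣ s} ⊆ (fun q : ↥P => (q.1 : ℕ)) ⁻¹' (Set.Iic s) :=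
        fun q hq => Nat.le_of_dvd hspos hq
      exact Set.Finite.subset (Set.Finite.preimage hinj.injOn (Set.finite_Iic s)) this
    refine ⟨⟨_, hmem⟩, ?_⟩
    apply Subtype.ext
    funext q
    show ((s : ℕ) : ℚ_[(q.1 : ℕ)])⁻¹ * FiniteAdeles.val P (s : FiniteAdeles P) q = 1
    rw [finiteAdeles_natCast_apply]
    exact inv_mul_cancel₀ (hsne q)
  refine ⟨fun x => (key x).imp fun s hs => ⟨hs.1, hs.2.2⟩, ?_⟩
  refine ⟨⟨fun m => if hm : 0 < m then (fun c => (hinv m hm).choose • c) '' C else ∅, ?_, ?_⟩⟩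
  · intro m
    dsimp only
    split_ifs
    · exact hCc.image (continuous_const_smul _)
    · exact isCompact_empty
  · apply Set.eq_univ_of_forall
    intro x
    rw [Set.mem_iUnion]
    obtain ⟨s, _, hspos, hsC⟩ := key x
    refine ⟨s, ?_⟩
    rw [dif_pos hspos]
    refine ⟨s • x, hsC, ?_⟩
    show (hinv s hspos).choose • (s • x) = x
    rw [← Nat.cast_smul_eq_nsmul (FiniteAdeles P), ← mul_smul, (hinv s hspos).choose_spec,
      one_smul]
end

section
/- Let Σ be a set of prime numbers, S the multiplicative submonoid of ℕ generated by Σ, and M a locally compact Hausdorff topological module over the discrete ring ℤ[S⁻¹] such that M contains a compact open subgroup and M is compactly generated. Then there exist k ∈ ℕ and an isomorphism of topological ℤ[S⁻¹]-modules M ≅ (ℤ[S⁻¹])^k × C(M), where (ℤ[S⁻¹])^k carries the discrete topology and C(M) is the submodule of compact elements of M. -/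
open Filter Set Pointwise

/-- `ℤ[S⁻¹]`: the subring of `ℚ` generated by `ℤ` together with the inverses of the primes
in `P` (where `S` is the multiplicative submonoid of `ℕ` generated by `P`). -/
def zLoc (P : Set Nat.Primes) : Subring ℚ :=
  Subring.closure {x : ℚ | ∃ q ∈ P, x = ((q : ℕ) : ℚ)⁻¹}

/-- `ℤ[S⁻¹]`, regarded as a discrete topological ring. -/
def ZS (P : Set Nat.Primes) := ↥(zLoc P)

instance (P : Set Nat.Primes) : CommRing (ZS P) := inferInstanceAs (CommRing ↥(zLoc P))

instance (P : Set Nat.Primes) : TopologicalSpace (ZS P) := ⊥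

instance (P : Set Nat.Primes) : DiscreteTopology (ZS P) := ⟨rfl⟩

instance (P : Set Nat.Primes) : IsTopologicalRing (ZS P) where
  continuous_add := continuous_of_discreteTopology
  continuous_mul := continuous_of_discreteTopology
  continuous_neg := continuous_of_discreteTopology

/-- The inclusion `ℤ[S⁻¹] → ℚ`. -/
def ZSval (P : Set Nat.Primes) : ZS P →+* ℚ := (zLoc P).subtype

/-- The compact elements of a locally compact topological module form a submodule. -/
def compactElements (R M : Type*) [Semiring R] [AddCommGroup M] [Module R M]
    [TopologicalSpace M] [IsTopologicalAddGroup M] [T2Space M] [ContinuousConstSMul R M] :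
    Submodule R M where
  carrier := {x | IsCompact (closure ((AddSubgroup.zmultiples x : AddSubgroup M) : Set M))}
  zero_mem' := by
    show IsCompact (closure ((AddSubgroup.zmultiples (0 : M) : AddSubgroup M) : Set M))
    have h : ((AddSubgroup.zmultiples (0 : M) : AddSubgroup M) : Set M) = {0} := by
      ext y
      simp [AddSubgroup.mem_zmultiples_iff, eq_comm]
    rw [h, closure_singleton]
    exact isCompact_singleton
  add_mem' := by
    intro a b ha hb
    have ha' : IsCompact (closure ((AddSubgroup.zmultiples a : AddSubgroup M) : Set M)) := ha
    have hb' : IsCompact (closure ((AddSubgroup.zmultiples b : AddSubgroup M) : Set M)) := hb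
    have hsum := ha'.add hb'
    refine IsCompact.of_isClosed_subset hsum isClosed_closure
      (closure_minimal ?_ hsum.isClosed)
    rintro y hy
    obtain ⟨k, rfl⟩ := AddSubgroup.mem_zmultiples_iff.mp hy
    rw [smul_add]
    exact Set.add_mem_add (subset_closure (AddSubgroup.zsmul_mem_zmultiples a k))
      (subset_closure (AddSubgroup.zsmul_mem_zmultiples b k))
  smul_mem' := by
    intro r x hx
    have hx' : IsCompact (closure ((AddSubgroup.zmultiples x : AddSubgroup M) : Set M)) := hx
    have himg : IsCompact
        ((r • ·) '' closure ((AddSubgroup.zmultiples x : AddSubgroup M) : Set M)) :=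
      hx'.image (continuous_const_smul r)
    refine IsCompact.of_isClosed_subset himg isClosed_closure
      (closure_minimal ?_ himg.isClosed)
    rintro y hy
    obtain ⟨k, rfl⟩ := AddSubgroup.mem_zmultiples_iff.mp hy
    refine ⟨k • x, subset_closure (AddSubgroup.zsmul_mem_zmultiples x k), ?_⟩
    show r • k • x = k • r • x; exact smul_comm r k x



/-- Every subring of `ℚ` is a principal ideal ring. -/
theorem Subring.ratPID (R : Subring ℚ) : IsPrincipalIdealRing ↥R := by
  constructor
  intro I
  let J : Ideal ℤ := I.comap (Int.castRingHom ↥R)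
  haveI hJ : J.IsPrincipal := IsPrincipalIdealRing.principal J
  set g : ℤ := Submodule.IsPrincipal.generator J with hg
  refine ⟨(g : ↥R), ?_⟩
  apply le_antisymm
  · intro x hx
    set q : ℚ := (x : ℚ) with hq
    set a : ℤ := q.num with hadef
    set bz : ℤ := (q.den : ℤ) with hbdef
    have hden0 : ((q.den : ℚ)) ≠ 0 := by
      exact_mod_cast q.den_ne_zero
    have hbq : ((q.den : ℚ)) * q = (a : ℚ) := by
      rw [mul_comm, Rat.mul_den_eq_num]
    -- Bezout
    have hgcd : Int.gcd a bz = 1 := by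
      have := q.reduced
      simp [Int.gcd, hadef, hbdef, Nat.Coprime] at this ⊢
      exact this
    have hbez : (1 : ℤ) = a * a.gcdA bz + bz * a.gcdB bz := by
      have := Int.gcd_eq_gcd_ab a bz
      rw [hgcd] at this
      exact_mod_cast this
    set u : ℤ := a.gcdA bz
    set v : ℤ := a.gcdB bz
    set c : ℚ := (u : ℚ) * q + (v : ℚ) with hcdef
    have hc : c ∈ R := R.add_mem (R.mul_mem (intCast_mem R u) x.2) (intCast_mem R v)
    have hbc : ((q.den : ℚ)) * c = 1 := by
      have h1 : ((a * u + bz * v : ℤ) : ℚ) = 1 := by exact_mod_cast hbez.symm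
      push_cast at h1
      calc ((q.den : ℚ)) * c = (u : ℚ) * ((q.den : ℚ) * q) + (v:ℚ) * (q.den:ℚ) := by
            rw [hcdef]; ring
        _ = (a:ℚ) * u + (bz:ℚ) * v := by rw [hbq, hbdef]; push_cast; ring
        _ = 1 := h1
    -- a ∈ J
    have haR : ((a : ↥R)) = ((bz : ↥R)) * x := by
      apply Subtype.ext
      push_cast
      rw [← hbq, hbdef]
      push_cast
      ring
    have haI : ((a : ↥R)) ∈ I := by
      rw [haR]; exact I.mul_mem_left _ hx
    have haJ : a ∈ J := by
      show (Int.castRingHom ↥R) a ∈ I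
      simpa using haI
    have hdvd : g ∣ a := by
      have := (Submodule.IsPrincipal.mem_iff_generator_dvd J).mp haJ
      exact this
    obtain ⟨m, hm⟩ := hdvd
    -- x = g * (m * c)
    show x ∈ Ideal.span {(↑g : ↥R)}
    rw [Ideal.mem_span_singleton]
    refine ⟨(m : ↥R) * ⟨c, hc⟩, ?_⟩
    apply Subtype.ext
    push_cast
    have hac : (a : ℚ) * c = q := by
      rw [← hbq]
      calc (q.den:ℚ) * q * c = q * ((q.den:ℚ) * c) := by ring
        _ = q := by rw [hbc, mul_one]
    calc (x : ℚ) = q := rfl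
      _ = (a : ℚ) * c := hac.symm
      _ = ((g : ℚ)) * ((m:ℚ) * c) := by rw [hm]; push_cast; ring
  · show Ideal.span {(↑g : ↥R)} ≤ I
    rw [Ideal.span_le]
    intro y hy
    rw [Set.mem_singleton_iff] at hy
    subst hy
    have := Submodule.IsPrincipal.generator_mem J
    exact this



theorem zmultiples_neg_eq {M : Type*} [AddCommGroup M] (y : M) :
    ((AddSubgroup.zmultiples (-y) : AddSubgroup M) : Set M) = (AddSubgroup.zmultiples y : AddSubgroup M) := by
  ext z
  simp only [SetLike.mem_coe, AddSubgroup.mem_zmultiples_iff]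
  constructor
  · rintro ⟨k, rfl⟩; exact ⟨-k, by rw [neg_smul, smul_neg]⟩
  · rintro ⟨k, rfl⟩; exact ⟨-k, by rw [neg_smul, smul_neg, neg_neg]⟩

theorem compactEl_of_int_smul {M : Type*} [AddCommGroup M] [TopologicalSpace M]
    [IsTopologicalAddGroup M] [T2Space M] (x : M) (a : ℤ) (ha : a ≠ 0)
    (h : IsCompact (closure ((AddSubgroup.zmultiples (a • x) : AddSubgroup M) : Set M))) :
    IsCompact (closure ((AddSubgroup.zmultiples x : AddSubgroup M) : Set M)) := by
  set b : ℤ := (a.natAbs : ℤ) with hbdef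
  have hb0 : 0 < b := by
    have : 0 < a.natAbs := Int.natAbs_pos.mpr ha
    rw [hbdef]; exact_mod_cast this
  have hA : IsCompact (closure ((AddSubgroup.zmultiples (b • x) : AddSubgroup M) : Set M)) := by
    rcases Int.natAbs_eq a with heq | heq
    · rw [← heq] at hbdef; rwa [hbdef]
    · have hbx : b • x = -(a • x) := by rw [heq, neg_smul, neg_neg]
      rw [hbx, zmultiples_neg_eq]
      exact h
  set A : Set M := closure ((AddSubgroup.zmultiples (b • x) : AddSubgroup M) : Set M) with hAdef
  set F : Set M := ⋃ j ∈ Finset.range b.toNat, (fun y => ((j : ℤ)) • x + y) '' A with hFdef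
  have hF : IsCompact F :=
    (Finset.range b.toNat).finite_toSet.isCompact_biUnion
      (fun j _ => hA.image (continuous_add_left _))
  have hsub : ((AddSubgroup.zmultiples x : AddSubgroup M) : Set M) ⊆ F := by
    intro z hz
    obtain ⟨k, rfl⟩ := AddSubgroup.mem_zmultiples_iff.mp hz
    set j : ℤ := k % b with hjdef
    set q : ℤ := k / b with hqdef
    have hj0 : 0 ≤ j := Int.emod_nonneg k hb0.ne'
    have hjlt : j < b := Int.emod_lt_of_pos k hb0
    have hk : b * q + j = k := Int.mul_ediv_add_emod k b
    have hmem1 : j.toNat ∈ Finset.range b.toNat := by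
      rw [Finset.mem_range]; omega
    apply Set.mem_biUnion hmem1
    refine ⟨q • (b • x), subset_closure (AddSubgroup.mem_zmultiples_iff.mpr ⟨q, rfl⟩), ?_⟩
    rw [Int.toNat_of_nonneg hj0]
    rw [← hk, add_smul, mul_comm b q, mul_smul, add_comm]
  exact IsCompact.of_isClosed_subset hF isClosed_closure (closure_minimal hsub hF.isClosed)

theorem continuous_of_const_on_cosets {M X : Type*} [AddCommGroup M] [TopologicalSpace M]
    [IsTopologicalAddGroup M] [TopologicalSpace X] {N : Set M} (hN : IsOpen N) (h0 : (0:M) ∈ N)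
    {f : M → X} (hf : ∀ x y : M, y - x ∈ N → f y = f x) : Continuous f := by
  rw [continuous_iff_continuousAt]
  intro x
  apply Filter.EventuallyEq.continuousAt (y := f x)
  have hmem : (fun y => y - x) ⁻¹' N ∈ nhds x :=
    (hN.preimage (continuous_id.sub continuous_const)).mem_nhds (by simpa using h0)
  exact Filter.eventually_of_mem hmem fun y hy => hf x y hy

instance (P : Set Nat.Primes) : IsDomain (ZS P) := inferInstanceAs (IsDomain ↥(zLoc P))

instance (P : Set Nat.Primes) : Nontrivial (ZS P) := inferInstanceAs (Nontrivial ↥(zLoc P))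

instance (P : Set Nat.Primes) : IsPrincipalIdealRing (ZS P) := Subring.ratPID (zLoc P)

/-- Let `M` be a locally compact Hausdorff topological module over the discrete
ring `ℤ[S⁻¹]` which contains a compact open subgroup and is compactly generated. Then
`M ≅ (ℤ[S⁻¹])^k × C(M)` as topological `ℤ[S⁻¹]`-modules for some `k`, where `(ℤ[S⁻¹])^k` is
discrete and `C(M)` is the submodule of compact elements of `M`. -/
theorem stmt_14 (P : Set Nat.Primes) (M : Type*) [AddCommGroup M] [Module (ZS P) M]
    [TopologicalSpace M] [IsTopologicalAddGroup M] [ContinuousSMul (ZS P) M]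
    [LocallyCompactSpace M] [T2Space M]
    (hopen : ∃ C : AddSubgroup M, IsCompact (C : Set M) ∧ IsOpen (C : Set M))
    (hcg : ∃ K : Set M, IsCompact K ∧ Submodule.span (ZS P) K = ⊤) :
    ∃ k : ℕ, ∃ e : M ≃ₗ[ZS P] (Fin k → ZS P) × ↥(compactElements (ZS P) M),
      Continuous ⇑e ∧ Continuous ⇑e.symm := by
  classical
  obtain ⟨C, hCcomp, hCopen⟩ := hopen
  obtain ⟨K, hKcomp, hKspan⟩ := hcg
  set N : Submodule (ZS P) M := compactElements (ZS P) M with hNdef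
  -- `N` is open
  have hCN : C ≤ N.toAddSubgroup := by
    intro x hx
    show IsCompact (closure ((AddSubgroup.zmultiples x : AddSubgroup M) : Set M))
    have hsub : ((AddSubgroup.zmultiples x : AddSubgroup M) : Set M) ⊆ C := by
      rintro z hz
      obtain ⟨k, rfl⟩ := AddSubgroup.mem_zmultiples_iff.mp hz
      exact AddSubgroup.zsmul_mem C hx k
    exact IsCompact.of_isClosed_subset hCcomp isClosed_closure
      (closure_minimal hsub hCcomp.isClosed)
  have hNopen : IsOpen (N : Set M) := AddSubgroup.isOpen_mono hCN hCopen
  have hN0 : (0 : M) ∈ (N : Set M) := N.zero_mem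
  -- the quotient is finitely generated
  have hcover : K ⊆ ⋃ z : M, (fun y => y - z) ⁻¹' (N : Set M) := by
    intro x _
    exact Set.mem_iUnion.mpr ⟨x, by simpa using hN0⟩
  obtain ⟨t, ht⟩ := hKcomp.elim_finite_subcover
    (fun z : M => (fun y => y - z) ⁻¹' (N : Set M))
    (fun z => hNopen.preimage (continuous_id.sub continuous_const)) hcover
  haveI hfin : Module.Finite (ZS P) (M ⧸ N) := by
    constructor
    refine ⟨t.image N.mkQ, ?_⟩
    apply le_antisymm le_top
    have h1 : Submodule.span (ZS P) (N.mkQ '' K) = ⊤ := by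
      rw [← Submodule.map_span, hKspan, Submodule.map_top, Submodule.range_mkQ]
    rw [← h1]
    apply Submodule.span_mono
    rintro _ ⟨x, hxK, rfl⟩
    obtain ⟨z, hz, hxz⟩ := Set.mem_iUnion₂.mp (ht hxK)
    have hxz' : N.mkQ x = N.mkQ z := by
      rw [Submodule.mkQ_apply, Submodule.mkQ_apply, Submodule.Quotient.eq]
      exact hxz
    rw [hxz']
    exact Finset.mem_coe.mpr (Finset.mem_image.mpr ⟨z, hz, rfl⟩)
  -- torsion-freeness
  have hkey : ∀ (r : ZS P) (x : M), r ≠ 0 → r • x ∈ N → x ∈ N := by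
    intro r x hr hrx
    have hinj : Function.Injective (ZSval P) := fun a b h => Subtype.ext h
    set v : ℚ := ZSval P r with hv
    have hv0 : v ≠ 0 := by
      intro h
      exact hr (hinj (by rw [← hv, h, map_zero]))
    have hnum : ((v.num : ZS P)) = ((v.den : ℤ) : ZS P) * r := by
      apply hinj
      rw [map_mul, map_intCast, map_intCast, ← hv]
      push_cast
      rw [mul_comm]
      exact (Rat.mul_den_eq_num v).symm
    have h1 : ((v.den : ℤ) : ZS P) • (r • x) ∈ N := N.smul_mem _ hrx
    rw [smul_smul, ← hnum, Int.cast_smul_eq_zsmul] at h1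
    have hnum0 : v.num ≠ 0 := Rat.num_ne_zero.mpr hv0
    exact compactEl_of_int_smul x v.num hnum0 h1
  haveI htf : NoZeroSMulDivisors (ZS P) (M ⧸ N) := by
    constructor
    intro r q hq
    by_cases hr : r = 0
    · exact Or.inl hr
    · right
      obtain ⟨x, rfl⟩ := N.mkQ_surjective q
      rw [← map_smul] at hq
      have hmem : r • x ∈ N := by
        rwa [Submodule.mkQ_apply, Submodule.Quotient.mk_eq_zero] at hq
      rw [Submodule.mkQ_apply, Submodule.Quotient.mk_eq_zero]
      exact hkey r x hr hmem
  haveI hfree : Module.Free (ZS P) (M ⧸ N) := Module.free_of_finite_type_torsion_free'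
  set k := Module.finrank (ZS P) (M ⧸ N) with hk
  set b : Module.Basis (Fin k) (ZS P) (M ⧸ N) := Module.finBasis (ZS P) (M ⧸ N) with hb
  obtain ⟨s, hs⟩ := Module.projective_lifting_property N.mkQ LinearMap.id N.mkQ_surjective
  have hmkQs : ∀ q : M ⧸ N, N.mkQ (s q) = q := fun q => by
    simpa using LinearMap.congr_fun hs q
  have hmem : ∀ x : M, x - s (N.mkQ x) ∈ N := by
    intro x
    have h0 : N.mkQ (x - s (N.mkQ x)) = 0 := by
      rw [map_sub, hmkQs, sub_self]
    rw [Submodule.mkQ_apply] at h0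
    exact (Submodule.Quotient.mk_eq_zero N).mp h0
  let F : M →ₗ[ZS P] (Fin k → ZS P) × N :=
    LinearMap.prod (b.equivFun.toLinearMap ∘ₗ N.mkQ)
      ((LinearMap.id - s ∘ₗ N.mkQ).codRestrict N hmem)
  let G : ((Fin k → ZS P) × N) →ₗ[ZS P] M :=
    (s ∘ₗ b.equivFun.symm.toLinearMap ∘ₗ LinearMap.fst (ZS P) (Fin k → ZS P) N) +
      (N.subtype ∘ₗ LinearMap.snd (ZS P) (Fin k → ZS P) N)
  have hmkQN : ∀ c : N, N.mkQ (c : M) = 0 := fun c => by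
    rw [Submodule.mkQ_apply, Submodule.Quotient.mk_eq_zero]
    exact c.2
  have hGF : G ∘ₗ F = LinearMap.id := by
    apply LinearMap.ext
    intro x
    simp only [F, G, LinearMap.comp_apply, LinearMap.prod_apply, LinearMap.add_apply,
      LinearMap.fst_apply, LinearMap.snd_apply, Function.prod, LinearMap.codRestrict_apply,
      Submodule.coe_subtype, LinearMap.sub_apply, LinearMap.id_apply,
      LinearEquiv.coe_coe, LinearEquiv.symm_apply_apply]
    abel
  have hFG : F ∘ₗ G = LinearMap.id := by
    apply LinearMap.ext
    rintro ⟨w, c⟩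
    have hq : N.mkQ (s (b.equivFun.symm w) + (c : M)) = b.equivFun.symm w := by
      rw [map_add, hmkQs, hmkQN, add_zero]
    apply Prod.ext
    · show b.equivFun (N.mkQ (s (b.equivFun.symm w) + (c : M))) = w
      rw [hq, LinearEquiv.apply_symm_apply]
    · apply Subtype.ext
      show (s (b.equivFun.symm w) + (c : M)) -
        s (N.mkQ (s (b.equivFun.symm w) + (c : M))) = (c : M)
      rw [hq]
      abel
  refine ⟨k, LinearEquiv.ofLinear F G hFG hGF, ?_, ?_⟩
  · have hc1 : Continuous fun x : M => b.equivFun (N.mkQ x) := by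
      apply continuous_of_const_on_cosets hNopen hN0
      intro x y hxy
      have : N.mkQ y = N.mkQ x := by
        rw [Submodule.mkQ_apply, Submodule.mkQ_apply, Submodule.Quotient.eq]
        exact hxy
      rw [this]
    have hc2 : Continuous fun x : M => s (N.mkQ x) := by
      apply continuous_of_const_on_cosets hNopen hN0
      intro x y hxy
      have : N.mkQ y = N.mkQ x := by
        rw [Submodule.mkQ_apply, Submodule.mkQ_apply, Submodule.Quotient.eq]
        exact hxy
      rw [this]
    show Continuous ⇑F
    have : ⇑F = fun x : M =>
        ((b.equivFun (N.mkQ x), ⟨x - s (N.mkQ x), hmem x⟩) : (Fin k → ZS P) × N) := rfl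
    rw [this]
    exact hc1.prodMk (Continuous.subtype_mk (continuous_id.sub hc2) _)
  · show Continuous ⇑G
    have : ⇑G = fun p : (Fin k → ZS P) × N => s (b.equivFun.symm p.1) + (p.2 : M) := rfl
    rw [this]
    exact ((continuous_of_discreteTopology
        (f := fun w : Fin k → ZS P => s (b.equivFun.symm w))).comp continuous_fst).add
      (continuous_subtype_val.comp continuous_snd)
end
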